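/- arXiv:2402.07568 — 2 statements merged into one kernel-verified Lean document; each statement's English description precedes it below -/
import Mathlib

section
/- For every n ≥ 10, there exists a set S of pairwise non-isomorphic graphs of order at most n, a concept c : S → {0,1}, and a graph F such that: (1) the graphs in S are pairwise distinguishable by 1-WL after one round; (2) for every T ≥ 0, the normalized 1-WL feature vectors {φ̄^{(T)}_WL(G) : G ∈ S} are NOT linearly separable with respect to the concept c; (3) for every T ≥ 0, with 𝓕 := {F}, the normalized 1-WL_𝓕 feature vectors {φ̄^{(T)}_{WL,𝓕}(G) : G ∈ S} ARE linearly separable with respect to c. The same statements hold for the unnormalized feature vectors. -/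
open scoped Classical

noncomputable section

/-- The type of 1-WL colors after `t` rounds, with initial colors in `A`.  A color at round
`t+1` is the pair of the color at round `t` together with the multiset of the neighbors'
colors at round `t`; this encodes the colorings of the Weisfeiler--Leman algorithm up to the
injective renaming `RELABEL`. -/
def WLColor (A : Type) : ℕ → Type :=
  fun t => Nat.rec A (fun _ C => C × Multiset C) t

/-- The 1-WL coloring after `t` rounds of a finite graph `G` with initial labeling `lab`:
`C_0 := lab` and `C_{t+1}(v) := (C_t(v), {{C_t(u) : u ∈ N(v)}})`. -/
def wlColoring {V A : Type} [Fintype V] (G : SimpleGraph V) (lab : V → A) :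
    (t : ℕ) → V → WLColor A t :=
  fun t => Nat.rec (motive := fun t => V → WLColor A t) lab
    (fun _ ih v => (ih v, ((Finset.univ.filter fun u => G.Adj v u).val.map ih))) t

/-- The number of vertices of `G` having 1-WL color `c` at round `t`
(an entry of the WL feature vector `φ_t(G)`). -/
def wlCount {V A : Type} [Fintype V] (G : SimpleGraph V) (lab : V → A) (t : ℕ)
    (c : WLColor A t) : ℕ :=
  (Finset.univ.filter fun v => wlColoring G lab t v = c).card

/-- The set `Σ_t` of colors appearing in `G` at round `t`. -/
def wlColors {V A : Type} [Fintype V] (G : SimpleGraph V) (lab : V → A) (t : ℕ) :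
    Finset (WLColor A t) :=
  Finset.univ.image (wlColoring G lab t)

/-- The constant labeling of an unlabeled graph. -/
def unlab {V : Type} : V → ℕ := fun _ => 0

/-- A bundled finite graph. -/
structure FinGraph where
  n : ℕ
  adj : SimpleGraph (Fin n)

/-- `v` is contained in a vertex subset `X` of `G` such that the induced subgraph `G[X]`
is isomorphic to `F`. -/
def inSubCopy {V : Type} (G : SimpleGraph V) (F : FinGraph) (v : V) : Prop :=
  ∃ X : Finset V, v ∈ X ∧ Nonempty (G.induce (X : Set V) ≃g F.adj)

/-- The initial labeling `ℓ_𝓕` of the `1`-WL_𝓕 algorithm: two vertices get the same label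
iff they agree, for every `F ∈ 𝓕`, on containment in a vertex subset inducing a subgraph
isomorphic to `F`. -/
def ellF {V : Type} (G : SimpleGraph V) (FF : Finset FinGraph) : V → Set FinGraph :=
  fun v => {F | F ∈ FF ∧ inSubCopy G F v}

/-- The Euclidean norm of the WL feature vector `φ^{(T)}(G)`. -/
def wlNorm {V A : Type} [Fintype V] (G : SimpleGraph V) (lab : V → A) (T : ℕ) : ℝ :=
  Real.sqrt (∑ t ∈ Finset.range (T + 1), ∑ c ∈ wlColors G lab t,
    ((wlCount G lab t c : ℝ)) ^ 2)

/-- Inner product `⟨w, φ^{(T)}(G)⟩` of a weight vector `w` (one weight for every round and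
every color) with the WL feature vector of `G`; the sum may range over the colors occurring
in `G` because all other coordinates of the feature vector vanish. -/
def wlIP {V A : Type} [Fintype V] (w : (t : ℕ) → WLColor A t → ℝ) (G : SimpleGraph V)
    (lab : V → A) (T : ℕ) : ℝ :=
  ∑ t ∈ Finset.range (T + 1), ∑ c ∈ wlColors G lab t, w t c * (wlCount G lab t c : ℝ)

/-- Linear separability of the family `{(G, cl G) : G ∈ S}` with respect to a feature map
whose inner products with hyperplane normal vectors `w` are given by `ip`. -/
def LinSepBy {X A : Type} (S : Finset X) (cl : X → Bool)
    (ip : ((t : ℕ) → WLColor A t → ℝ) → X → ℝ) : Prop :=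
  ∃ (w : (t : ℕ) → WLColor A t → ℝ) (b : ℝ), ∀ G ∈ S,
    (cl G = true → 0 < ip w G + b) ∧ (cl G = false → ip w G + b < 0)

set_option linter.unusedVariables false
set_option linter.unreachableTactic false
set_option linter.unusedTactic false

def reg {A : Type} (a : A) (d : ℕ) : (t : ℕ) → WLColor A t
  | 0 => a
  | t+1 => (reg a d t, Multiset.replicate d (reg a d t))

lemma wl_reg {V A : Type} [Fintype V] (G : SimpleGraph V) (lab : V → A) (a : A) (d : ℕ)
    (h1 : ∀ v, lab v = a) (h2 : ∀ v, (Finset.univ.filter fun u => G.Adj v u).card = d) :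
    ∀ t v, wlColoring G lab t v = reg a d t := by
  intro t
  induction t with
  | zero => exact h1
  | succ t ih =>
    intro v
    have e : wlColoring G lab (t+1) v
        = (wlColoring G lab t v,
           ((Finset.univ.filter fun u => G.Adj v u).val.map (wlColoring G lab t))) := rfl
    have e2 : ((Finset.univ.filter fun u => G.Adj v u).val.map (wlColoring G lab t))
        = Multiset.replicate d (reg a d t) := by
      rw [Multiset.map_congr rfl (fun x _ => ih x), Multiset.map_const']
      congr 1
      exact h2 v
    rw [e, ih v, e2]
    rfl

lemma colors_reg {V A : Type} [Fintype V] [Nonempty V] (G : SimpleGraph V) (lab : V → A)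
    (a : A) (d : ℕ)
    (h1 : ∀ v, lab v = a) (h2 : ∀ v, (Finset.univ.filter fun u => G.Adj v u).card = d)
    (t : ℕ) : wlColors G lab t = {reg a d t} := by
  ext c
  simp [wlColors, wl_reg G lab a d h1 h2 t, eq_comm]

lemma count_reg {V A : Type} [Fintype V] (G : SimpleGraph V) (lab : V → A)
    (a : A) (d : ℕ)
    (h1 : ∀ v, lab v = a) (h2 : ∀ v, (Finset.univ.filter fun u => G.Adj v u).card = d)
    (t : ℕ) : wlCount G lab t (reg a d t) = Fintype.card V := by
  unfold wlCount
  rw [Finset.filter_true_of_mem (fun v _ => wl_reg G lab a d h1 h2 t v)]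
  exact Finset.card_univ

lemma ip_reg {V A : Type} [Fintype V] [Nonempty V] (G : SimpleGraph V) (lab : V → A)
    (a : A) (d : ℕ)
    (h1 : ∀ v, lab v = a) (h2 : ∀ v, (Finset.univ.filter fun u => G.Adj v u).card = d)
    (w : (t : ℕ) → WLColor A t → ℝ) (T : ℕ) :
    wlIP w G lab T = (∑ t ∈ Finset.range (T+1), w t (reg a d t)) * (Fintype.card V : ℝ) := by
  unfold wlIP
  rw [Finset.sum_mul]
  refine Finset.sum_congr rfl fun t _ => ?_
  rw [colors_reg G lab a d h1 h2 t, Finset.sum_singleton, count_reg G lab a d h1 h2 t]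

lemma norm_reg {V A : Type} [Fintype V] [Nonempty V] (G : SimpleGraph V) (lab : V → A)
    (a : A) (d : ℕ)
    (h1 : ∀ v, lab v = a) (h2 : ∀ v, (Finset.univ.filter fun u => G.Adj v u).card = d)
    (T : ℕ) :
    wlNorm G lab T = (Fintype.card V : ℝ) * Real.sqrt (T+1) := by
  unfold wlNorm
  have e : ∀ t ∈ Finset.range (T+1),
      (∑ c ∈ wlColors G lab t, ((wlCount G lab t c : ℝ)) ^ 2) = (Fintype.card V : ℝ)^2 :=
    fun t _ => by
      rw [colors_reg G lab a d h1 h2 t, Finset.sum_singleton, count_reg G lab a d h1 h2 t]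
  rw [Finset.sum_congr rfl e, Finset.sum_const, Finset.card_range, nsmul_eq_mul]
  push_cast
  rw [Real.sqrt_mul (by positivity), Real.sqrt_sq (by positivity), mul_comm]

lemma clique_iso {V : Type} [DecidableEq V] (G : SimpleGraph V) (X : Finset V)
    (h3 : X.card = 3) (hcl : ∀ a ∈ X, ∀ b ∈ X, (G.Adj a b ↔ a ≠ b)) :
    Nonempty (G.induce (X : Set V) ≃g (⊤ : SimpleGraph (Fin 3))) := by
  have hc : Fintype.card (X : Set V) = 3 := by
    rw [Fintype.card_congr (Equiv.subtypeEquivRight (fun x => Finset.mem_coe)),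
      Fintype.card_coe]
    exact h3
  let e := Fintype.equivFinOfCardEq hc
  refine ⟨⟨e, ?_⟩⟩
  intro a b
  show e a ≠ e b ↔ G.Adj a.1 b.1
  rw [hcl a.1 (Finset.mem_coe.1 a.2) b.1 (Finset.mem_coe.1 b.2)]
  constructor
  · intro h hab
    exact h (by rw [Subtype.ext hab])
  · intro h he
    exact h (congrArg Subtype.val (e.injective he))

lemma iso_clique {V : Type} (G : SimpleGraph V) (X : Finset V)
    (h : Nonempty (G.induce (X : Set V) ≃g (⊤ : SimpleGraph (Fin 3)))) :
    X.card = 3 ∧ ∀ a ∈ X, ∀ b ∈ X, a ≠ b → G.Adj a b := by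
  obtain ⟨iso⟩ := h
  constructor
  · have := Fintype.card_congr iso.toEquiv
    rw [Fintype.card_congr (Equiv.subtypeEquivRight (fun x => Finset.mem_coe)),
      Fintype.card_coe, Fintype.card_fin] at this
    exact this
  · intro a ha b hb hab
    have ha' : a ∈ (X : Set V) := Finset.mem_coe.2 ha
    have hb' : b ∈ (X : Set V) := Finset.mem_coe.2 hb
    have hne : iso ⟨a, ha'⟩ ≠ iso ⟨b, hb'⟩ := by
      intro he
      exact hab (congrArg Subtype.val (iso.toEquiv.injective he))
    have := iso.map_rel_iff.1 (by exact hne : (⊤ : SimpleGraph (Fin 3)).Adj _ _)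
    exact this

lemma ellF_pos {V : Type} (G : SimpleGraph V) (F0 : FinGraph)
    (h : ∀ v, inSubCopy G F0 v) (v : V) : ellF G {F0} v = ({F0} : Set FinGraph) := by
  ext F
  simp only [ellF, Set.mem_setOf_eq, Finset.mem_singleton, Set.mem_singleton_iff]
  exact ⟨fun h' => h'.1, fun h' => ⟨h', h' ▸ h v⟩⟩

lemma ellF_neg {V : Type} (G : SimpleGraph V) (F0 : FinGraph)
    (h : ∀ v, ¬ inSubCopy G F0 v) (v : V) : ellF G {F0} v = (∅ : Set FinGraph) := by
  ext F
  simp only [ellF, Set.mem_setOf_eq, Finset.mem_singleton, Set.mem_empty_iff_false,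
    iff_false, not_and]
  intro hF
  exact hF ▸ h v

def cyc (k : ℕ) : SimpleGraph (Fin k) where
  Adj v u := v ≠ u ∧ ((v.val + 1) % k = u.val ∨ (u.val + 1) % k = v.val)
  symm := ⟨fun v u h => ⟨h.1.symm, h.2.symm⟩⟩
  loopless := ⟨fun v h => h.1 rfl⟩

instance (k : ℕ) : DecidableRel (cyc k).Adj :=
  fun v u => inferInstanceAs (Decidable (v ≠ u ∧ ((v.val + 1) % k = u.val ∨ (u.val + 1) % k = v.val)))

def tri2 : SimpleGraph (Fin 6) where
  Adj v u := v ≠ u ∧ v.val / 3 = u.val / 3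
  symm := ⟨fun v u h => ⟨h.1.symm, h.2.symm⟩⟩
  loopless := ⟨fun v h => h.1 rfl⟩

instance : DecidableRel tri2.Adj :=
  fun v u => inferInstanceAs (Decidable (v ≠ u ∧ v.val / 3 = u.val / 3))

def K3g : FinGraph := ⟨3, ⊤⟩
def C4g : FinGraph := ⟨4, cyc 4⟩
def C5g : FinGraph := ⟨5, cyc 5⟩
def T6g : FinGraph := ⟨6, tri2⟩

-- degrees
lemma deg3 : ∀ v : Fin 3, (Finset.univ.filter fun u => (⊤ : SimpleGraph (Fin 3)).Adj v u).card = 2 := by decide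
lemma deg4 : ∀ v : Fin 4, (Finset.univ.filter fun u => (cyc 4).Adj v u).card = 2 := by decide
lemma deg5 : ∀ v : Fin 5, (Finset.univ.filter fun u => (cyc 5).Adj v u).card = 2 := by decide
lemma deg6 : ∀ v : Fin 6, (Finset.univ.filter fun u => tri2.Adj v u).card = 2 := by decide

lemma in3 : ∀ v : Fin 3, inSubCopy (⊤ : SimpleGraph (Fin 3)) K3g v := by
  intro v
  refine ⟨Finset.univ, Finset.mem_univ v, ?_⟩
  exact clique_iso _ _ (by decide) (by intro a _ b _; exact Iff.rfl)

lemma in6 : ∀ v : Fin 6, inSubCopy tri2 K3g v := by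
  intro v
  by_cases hv : v.val < 3
  · refine ⟨({0,1,2} : Finset (Fin 6)), ?_, ?_⟩
    · fin_cases v <;> simp_all <;> decide
    · exact clique_iso _ _ (by decide) (by decide)
  · refine ⟨({3,4,5} : Finset (Fin 6)), ?_, ?_⟩
    · fin_cases v <;> simp_all <;> decide
    · exact clique_iso _ _ (by decide) (by decide)

lemma notin4 : ∀ v : Fin 4, ¬ inSubCopy (cyc 4) K3g v := by
  intro v ⟨X, _, hiso⟩
  obtain ⟨h3, hcl⟩ := iso_clique _ _ hiso
  obtain ⟨a, b, c, hab, hac, hbc, rfl⟩ := Finset.card_eq_three.1 h3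
  have h1 := hcl a (by simp) b (by simp) hab
  have h2 := hcl a (by simp) c (by simp) hac
  have h3' := hcl b (by simp) c (by simp) hbc
  have : ∃ a b c : Fin 4, a ≠ b ∧ a ≠ c ∧ b ≠ c ∧ (cyc 4).Adj a b ∧ (cyc 4).Adj a c ∧ (cyc 4).Adj b c :=
    ⟨a, b, c, hab, hac, hbc, h1, h2, h3'⟩
  exact absurd this (by decide)

lemma notin5 : ∀ v : Fin 5, ¬ inSubCopy (cyc 5) K3g v := by
  intro v ⟨X, _, hiso⟩
  obtain ⟨h3, hcl⟩ := iso_clique _ _ hiso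
  obtain ⟨a, b, c, hab, hac, hbc, rfl⟩ := Finset.card_eq_three.1 h3
  have h1 := hcl a (by simp) b (by simp) hab
  have h2 := hcl a (by simp) c (by simp) hac
  have h3' := hcl b (by simp) c (by simp) hbc
  have : ∃ a b c : Fin 5, a ≠ b ∧ a ≠ c ∧ b ≠ c ∧ (cyc 5).Adj a b ∧ (cyc 5).Adj a c ∧ (cyc 5).Adj b c :=
    ⟨a, b, c, hab, hac, hbc, h1, h2, h3'⟩
  exact absurd this (by decide)

lemma filter_card_irrel {α : Type} [Fintype α] (p : α → Prop) (i1 i2 : DecidablePred p) (d : ℕ)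
    (h : (@Finset.filter α p i1 Finset.univ).card = d) :
    (@Finset.filter α p i2 Finset.univ).card = d := by
  rw [Subsingleton.elim i2 i1]
  exact h

lemma ip_fin (G : FinGraph) (hpos : 0 < G.n) (d : ℕ)
    (h2 : ∀ v : Fin G.n, (Finset.univ.filter fun u => G.adj.Adj v u).card = d)
    {A : Type} (lab : Fin G.n → A) (a : A) (h1 : ∀ v, lab v = a)
    (w : (t : ℕ) → WLColor A t → ℝ) (T : ℕ) :
    wlIP w G.adj lab T = (∑ t ∈ Finset.range (T+1), w t (reg a d t)) * (G.n : ℝ) := by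
  have hne : Nonempty (Fin G.n) := ⟨⟨0, hpos⟩⟩
  have := ip_reg G.adj lab a d h1 h2 w T
  simpa using this

lemma norm_fin (G : FinGraph) (hpos : 0 < G.n) (d : ℕ)
    (h2 : ∀ v : Fin G.n, (Finset.univ.filter fun u => G.adj.Adj v u).card = d)
    {A : Type} (lab : Fin G.n → A) (a : A) (h1 : ∀ v, lab v = a) (T : ℕ) :
    wlNorm G.adj lab T = (G.n : ℝ) * Real.sqrt (T+1) := by
  have hne : Nonempty (Fin G.n) := ⟨⟨0, hpos⟩⟩
  have := norm_reg G.adj lab a d h1 h2 T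
  simpa using this

@[simp] lemma K3g_n : K3g.n = 3 := rfl
@[simp] lemma C4g_n : C4g.n = 4 := rfl
@[simp] lemma C5g_n : C5g.n = 5 := rfl
@[simp] lemma T6g_n : T6g.n = 6 := rfl


/-- For every `n ≥ 10` there are a set `S` of pairwise non-isomorphic
graphs of order at most `n`, a concept `cl : S → {0,1}` and a graph `F` such that the graphs
in `S` are pairwise distinguished by `1`-WL after one round, are not linearly separable with
respect to `cl` under the (normalized or unnormalized) `1`-WL feature vectors for any
`T ≥ 0`, and are linearly separable with respect to `cl` under the (normalized or
unnormalized) `1`-WL_𝓕 feature vectors with `𝓕 := {F}` for all `T ≥ 0`. -/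
theorem wl_distinguishes_but_not_separates (n : ℕ) (hn : 10 ≤ n) :
    ∃ (S : Finset FinGraph) (cl : FinGraph → Bool) (F : FinGraph),
      (∀ G ∈ S, G.n ≤ n) ∧
      (∀ G ∈ S, ∀ H ∈ S, G ≠ H → IsEmpty (G.adj ≃g H.adj)) ∧
      -- (1) pairwise distinguishable by 1-WL after one round
      (∀ G ∈ S, ∀ H ∈ S, G ≠ H →
        Finset.univ.val.map (wlColoring G.adj unlab 1) ≠
          Finset.univ.val.map (wlColoring H.adj unlab 1)) ∧
      -- (2) not linearly separable under the normalized 1-WL feature vectors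
      (∀ T : ℕ, ¬ LinSepBy S cl
        (fun w G => wlIP w G.adj unlab T / wlNorm G.adj unlab T)) ∧
      -- (3) linearly separable under the normalized 1-WL_𝓕 feature vectors
      (∀ T : ℕ, LinSepBy S cl
        (fun w G => wlIP w G.adj (ellF G.adj {F}) T / wlNorm G.adj (ellF G.adj {F}) T)) ∧
      -- the same for the unnormalized feature vectors
      (∀ T : ℕ, ¬ LinSepBy S cl (fun w G => wlIP w G.adj unlab T)) ∧
      (∀ T : ℕ, LinSepBy S cl (fun w G => wlIP w G.adj (ellF G.adj {F}) T)) := by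
  have d3 : ∀ v : Fin K3g.n, (Finset.univ.filter fun u => K3g.adj.Adj v u).card = 2 :=
    fun v => filter_card_irrel _ _ _ _ (deg3 v)
  have d4 : ∀ v : Fin C4g.n, (Finset.univ.filter fun u => C4g.adj.Adj v u).card = 2 :=
    fun v => filter_card_irrel _ _ _ _ (deg4 v)
  have d5 : ∀ v : Fin C5g.n, (Finset.univ.filter fun u => C5g.adj.Adj v u).card = 2 :=
    fun v => filter_card_irrel _ _ _ _ (deg5 v)
  have d6 : ∀ v : Fin T6g.n, (Finset.univ.filter fun u => T6g.adj.Adj v u).card = 2 :=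
    fun v => filter_card_irrel _ _ _ _ (deg6 v)
  have in3' : ∀ v : Fin K3g.n, inSubCopy K3g.adj K3g v := fun v => in3 v
  have in6' : ∀ v : Fin T6g.n, inSubCopy T6g.adj K3g v := fun v => in6 v
  have notin4' : ∀ v : Fin C4g.n, ¬ inSubCopy C4g.adj K3g v := fun v => notin4 v
  have notin5' : ∀ v : Fin C5g.n, ¬ inSubCopy C5g.adj K3g v := fun v => notin5 v
  refine ⟨{K3g, C4g, C5g, T6g}, fun G => decide (G.n = 3 ∨ G.n = 6), K3g,
    ?_, ?_, ?_, ?_, ?_, ?_, ?_⟩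
  · intro G hG
    simp only [Finset.mem_insert, Finset.mem_singleton] at hG
    rcases hG with rfl | rfl | rfl | rfl <;> simp <;> omega
  · intro G hG H hH hne
    simp only [Finset.mem_insert, Finset.mem_singleton] at hG hH
    have key : G.n ≠ H.n → IsEmpty (G.adj ≃g H.adj) := fun h =>
      ⟨fun e => h (by simpa using Fintype.card_congr e.toEquiv)⟩
    rcases hG with rfl | rfl | rfl | rfl <;> rcases hH with rfl | rfl | rfl | rfl <;>
      first
      | exact absurd rfl hne
      | exact key (by simp)
  · intro G hG H hH hne
    simp only [Finset.mem_insert, Finset.mem_singleton] at hG hH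
    have key : ∀ {k m : ℕ} (Gk : SimpleGraph (Fin k)) (Gm : SimpleGraph (Fin m)), k ≠ m →
        Finset.univ.val.map (wlColoring Gk unlab 1) ≠
          Finset.univ.val.map (wlColoring Gm unlab 1) := by
      intro k m Gk Gm h he
      have := congrArg Multiset.card he
      simp at this
      exact h this
    rcases hG with rfl | rfl | rfl | rfl <;> rcases hH with rfl | rfl | rfl | rfl <;>
      first
      | exact absurd rfl hne
      | exact key _ _ (by simp)
  · -- not linearly separable, normalized plain WL
    intro T ⟨w, b, h⟩
    have hr : (0:ℝ) < Real.sqrt (T+1) := Real.sqrt_pos.2 (by positivity)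
    set s := ∑ t ∈ Finset.range (T+1), w t (reg (0:ℕ) 2 t) with hs
    have hK := (h K3g (by simp)).1 (by decide)
    have hC := (h C4g (by simp)).2 (by decide)
    beta_reduce at hK hC
    rw [ip_fin K3g (by norm_num) 2 d3 unlab 0 (fun _ => rfl) w T,
      norm_fin K3g (by norm_num) 2 d3 unlab 0 (fun _ => rfl) T] at hK
    rw [ip_fin C4g (by norm_num) 2 d4 unlab 0 (fun _ => rfl) w T,
      norm_fin C4g (by norm_num) 2 d4 unlab 0 (fun _ => rfl) T] at hC
    simp only [K3g_n, C4g_n, ← hs, Nat.cast_ofNat] at hK hC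
    have key : ∀ k : ℝ, k ≠ 0 → s * k / (k * Real.sqrt (T+1)) = s / Real.sqrt (T+1) := by
      intro k hk
      rw [div_eq_div_iff (mul_ne_zero hk (ne_of_gt hr)) (ne_of_gt hr)]
      ring
    rw [key 3 (by norm_num)] at hK
    rw [key 4 (by norm_num)] at hC
    linarith
  · -- linearly separable, normalized WL_F
    intro T
    refine ⟨fun t => Nat.casesOn t (motive := fun t => WLColor (Set FinGraph) t → ℝ)
      (fun c => if c = ({K3g} : Set FinGraph) then (1:ℝ) else -1) (fun _ _ => 0), 0, ?_⟩
    have hr : (0:ℝ) < Real.sqrt (T+1) := Real.sqrt_pos.2 (by positivity)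
    have hsum : ∀ a : Set FinGraph,
        (∑ t ∈ Finset.range (T+1), (fun t => Nat.casesOn t
            (motive := fun t => WLColor (Set FinGraph) t → ℝ)
            (fun c => if c = ({K3g} : Set FinGraph) then (1:ℝ) else -1) (fun _ _ => 0))
          t (reg a 2 t)) = (if a = ({K3g} : Set FinGraph) then (1:ℝ) else -1) := by
      intro a
      rw [Finset.sum_eq_single_of_mem 0 (Finset.mem_range.2 (Nat.succ_pos T))]
      · rfl
      · intro t _ ht
        cases t with
        | zero => exact absurd rfl ht
        | succ t => rfl
    have hne : (∅ : Set FinGraph) ≠ ({K3g} : Set FinGraph) :=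
      Ne.symm (Set.singleton_ne_empty K3g)
    intro G hG
    simp only [Finset.mem_insert, Finset.mem_singleton] at hG
    rcases hG with rfl | rfl | rfl | rfl
    · refine ⟨fun _ => ?_, fun hf => absurd hf (by decide)⟩
      beta_reduce
      rw [ip_fin K3g (by norm_num) 2 d3 _ ({K3g} : Set FinGraph) (ellF_pos _ _ in3') _ T,
        norm_fin K3g (by norm_num) 2 d3 _ ({K3g} : Set FinGraph) (ellF_pos _ _ in3') T,
        hsum, if_pos rfl]
      simp only [K3g_n]
      positivity
    · refine ⟨fun hf => absurd hf (by decide), fun _ => ?_⟩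
      beta_reduce
      rw [ip_fin C4g (by norm_num) 2 d4 _ (∅ : Set FinGraph) (ellF_neg _ _ notin4') _ T,
        norm_fin C4g (by norm_num) 2 d4 _ (∅ : Set FinGraph) (ellF_neg _ _ notin4') T,
        hsum, if_neg hne]
      simp only [C4g_n]
      have : (-1 : ℝ) * 4 / (4 * Real.sqrt (T+1)) < 0 :=
        div_neg_of_neg_of_pos (by norm_num) (by positivity)
      push_cast
      linarith
    · refine ⟨fun hf => absurd hf (by decide), fun _ => ?_⟩
      beta_reduce
      rw [ip_fin C5g (by norm_num) 2 d5 _ (∅ : Set FinGraph) (ellF_neg _ _ notin5') _ T,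
        norm_fin C5g (by norm_num) 2 d5 _ (∅ : Set FinGraph) (ellF_neg _ _ notin5') T,
        hsum, if_neg hne]
      simp only [C5g_n]
      have : (-1 : ℝ) * 5 / (5 * Real.sqrt (T+1)) < 0 :=
        div_neg_of_neg_of_pos (by norm_num) (by positivity)
      push_cast
      linarith
    · refine ⟨fun _ => ?_, fun hf => absurd hf (by decide)⟩
      beta_reduce
      rw [ip_fin T6g (by norm_num) 2 d6 _ ({K3g} : Set FinGraph) (ellF_pos _ _ in6') _ T,
        norm_fin T6g (by norm_num) 2 d6 _ ({K3g} : Set FinGraph) (ellF_pos _ _ in6') T,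
        hsum, if_pos rfl]
      simp only [T6g_n]
      positivity
  · -- not linearly separable, unnormalized plain WL
    intro T ⟨w, b, h⟩
    set s := ∑ t ∈ Finset.range (T+1), w t (reg (0:ℕ) 2 t) with hs
    have hK := (h K3g (by simp)).1 (by decide)
    have hC4 := (h C4g (by simp)).2 (by decide)
    have hC5 := (h C5g (by simp)).2 (by decide)
    have hT := (h T6g (by simp)).1 (by decide)
    beta_reduce at hK hC4 hC5 hT
    rw [ip_fin K3g (by norm_num) 2 d3 unlab 0 (fun _ => rfl) w T] at hK
    rw [ip_fin C4g (by norm_num) 2 d4 unlab 0 (fun _ => rfl) w T] at hC4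
    rw [ip_fin C5g (by norm_num) 2 d5 unlab 0 (fun _ => rfl) w T] at hC5
    rw [ip_fin T6g (by norm_num) 2 d6 unlab 0 (fun _ => rfl) w T] at hT
    simp only [K3g_n, C4g_n, C5g_n, T6g_n, ← hs] at hK hC4 hC5 hT
    push_cast at hK hC4 hC5 hT
    linarith
  · -- linearly separable, unnormalized WL_F
    intro T
    refine ⟨fun t => Nat.casesOn t (motive := fun t => WLColor (Set FinGraph) t → ℝ)
      (fun c => if c = ({K3g} : Set FinGraph) then (1:ℝ) else -1) (fun _ _ => 0), 0, ?_⟩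
    have hsum : ∀ a : Set FinGraph,
        (∑ t ∈ Finset.range (T+1), (fun t => Nat.casesOn t
            (motive := fun t => WLColor (Set FinGraph) t → ℝ)
            (fun c => if c = ({K3g} : Set FinGraph) then (1:ℝ) else -1) (fun _ _ => 0))
          t (reg a 2 t)) = (if a = ({K3g} : Set FinGraph) then (1:ℝ) else -1) := by
      intro a
      rw [Finset.sum_eq_single_of_mem 0 (Finset.mem_range.2 (Nat.succ_pos T))]
      · rfl
      · intro t _ ht
        cases t with
        | zero => exact absurd rfl ht
        | succ t => rfl
    have hne : (∅ : Set FinGraph) ≠ ({K3g} : Set FinGraph) :=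
      Ne.symm (Set.singleton_ne_empty K3g)
    intro G hG
    simp only [Finset.mem_insert, Finset.mem_singleton] at hG
    rcases hG with rfl | rfl | rfl | rfl
    · refine ⟨fun _ => ?_, fun hf => absurd hf (by decide)⟩
      beta_reduce
      rw [ip_fin K3g (by norm_num) 2 d3 _ ({K3g} : Set FinGraph) (ellF_pos _ _ in3') _ T,
        hsum, if_pos rfl]
      norm_num
    · refine ⟨fun hf => absurd hf (by decide), fun _ => ?_⟩
      beta_reduce
      rw [ip_fin C4g (by norm_num) 2 d4 _ (∅ : Set FinGraph) (ellF_neg _ _ notin4') _ T,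
        hsum, if_neg hne]
      norm_num
    · refine ⟨fun hf => absurd hf (by decide), fun _ => ?_⟩
      beta_reduce
      rw [ip_fin C5g (by norm_num) 2 d5 _ (∅ : Set FinGraph) (ellF_neg _ _ notin5') _ T,
        hsum, if_neg hne]
      norm_num
    · refine ⟨fun _ => ?_, fun hf => absurd hf (by decide)⟩
      beta_reduce
      rw [ip_fin T6g (by norm_num) 2 d6 _ ({K3g} : Set FinGraph) (ellF_pos _ _ in6') _ T,
        hsum, if_pos rfl]
      norm_num

end
end

section
/- Let 𝓕 be a finite set of graphs and T ≥ 0. For any two n-order graphs G and H: ‖φ^{(T)}_{WLOA,𝓕}(G) − φ^{(T)}_{WLOA,𝓕}(H)‖ ≥ ‖φ^{(T)}_WLOA(G) − φ^{(T)}_WLOA(H)‖; i.e., pairwise distances in the 1-WLOA_𝓕 feature space never decrease compared to the 1-WLOA feature space. -/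
open scoped Classical

noncomputable section

/-- The `(t, c, j)`-entry of the 1-WLOA feature vector of `G`: it equals `1` iff at least `j`
vertices of `G` have color `c` at round `t` (a unary encoding of the color counts). -/
def wloaEntry {V A : Type} [Fintype V] (G : SimpleGraph V) (lab : V → A) (t : ℕ)
    (c : WLColor A t) (j : ℕ) : ℝ :=
  if j ≤ wlCount G lab t c then 1 else 0

/-- The squared Euclidean distance `‖φ^{(T)}_WLOA(G) − φ^{(T)}_WLOA(H)‖²` between the 1-WLOA
feature vectors of two `n`-order graphs; the sum over colors may range over the colors
occurring in either graph since all other coordinates vanish. -/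
def wloaDistSq (n : ℕ) {V W A : Type} [Fintype V] [Fintype W] (G : SimpleGraph V)
    (labG : V → A) (H : SimpleGraph W) (labH : W → A) (T : ℕ) : ℝ :=
  ∑ t ∈ Finset.range (T + 1), ∑ c ∈ wlColors G labG t ∪ wlColors H labH t,
    ∑ j ∈ Finset.Icc 1 n, (wloaEntry G labG t c j - wloaEntry H labH t c j) ^ 2

def wlProj {A : Type} : (t : ℕ) → WLColor A t → WLColor ℕ t :=
  fun t => Nat.rec (motive := fun t => WLColor A t → WLColor ℕ t)
    (fun _ => show WLColor ℕ 0 from (0 : ℕ)) (fun _ ih c => (ih c.1, c.2.map ih)) t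

lemma wlColoring_succ {V A : Type} [Fintype V] (G : SimpleGraph V) (lab : V → A) (t : ℕ)
    (v : V) :
    wlColoring G lab (t + 1) v
      = (wlColoring G lab t v,
          ((Finset.univ.filter fun u => G.Adj v u).val.map (wlColoring G lab t))) := rfl

lemma wlProj_succ {A : Type} (t : ℕ) (c : WLColor A (t + 1)) :
    wlProj (t + 1) c = (wlProj t c.1, c.2.map (wlProj t)) := rfl

lemma wlColoring_proj {V A : Type} [Fintype V] (G : SimpleGraph V) (lab : V → A) :
    ∀ t (v : V), wlColoring G unlab t v = wlProj t (wlColoring G lab t v) := by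
  intro t
  induction t with
  | zero => intro v; rfl
  | succ t ih =>
    intro v
    rw [wlProj_succ, wlColoring_succ, wlColoring_succ]
    refine Prod.ext (ih v) ?_
    simp only [Multiset.map_map, Function.comp]
    exact Multiset.map_congr rfl (fun u _ => ih u)

lemma wlColors_proj {V A : Type} [Fintype V] (G : SimpleGraph V) (lab : V → A) (t : ℕ) :
    wlColors G unlab t = (wlColors G lab t).image (wlProj t) := by
  unfold wlColors
  rw [Finset.image_image]
  exact Finset.image_congr (fun v _ => wlColoring_proj G lab t v)

lemma wlCount_proj {V A : Type} [Fintype V] (G : SimpleGraph V) (lab : V → A) (t : ℕ)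
    (s : Finset (WLColor A t)) (hs : wlColors G lab t ⊆ s) (c : WLColor ℕ t) :
    wlCount G unlab t c
      = ∑ c' ∈ s.filter (fun c' => wlProj t c' = c), wlCount G lab t c' := by
  unfold wlCount
  rw [Finset.card_eq_sum_card_fiberwise
    (f := wlColoring G lab t) (t := s.filter (fun c' => wlProj t c' = c)) ?_]
  · refine Finset.sum_congr rfl (fun c' hc' => ?_)
    obtain ⟨-, hproj⟩ := Finset.mem_filter.mp hc'
    congr 1
    rw [Finset.filter_filter]
    refine Finset.filter_congr (fun v _ => ?_)
    constructor
    · exact fun h => h.2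
    · intro h
      exact ⟨by rw [wlColoring_proj G lab t v, h, hproj], h⟩
  · intro v hv
    rw [Finset.mem_coe, Finset.mem_filter] at hv ⊢
    refine ⟨hs (Finset.mem_image_of_mem _ (Finset.mem_univ v)), ?_⟩
    rw [← wlColoring_proj G lab t v]
    exact hv.2

lemma wlCount_le {V A : Type} [Fintype V] (G : SimpleGraph V) (lab : V → A) (t : ℕ)
    (c : WLColor A t) : wlCount G lab t c ≤ Fintype.card V :=
  Finset.card_filter_le _ _

lemma sum_sq_ind_le (n a b : ℕ) (hb : b ≤ n) (hab : a ≤ b) :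
    ∑ j ∈ Finset.Icc 1 n, ((if j ≤ a then (1:ℝ) else 0) - (if j ≤ b then 1 else 0)) ^ 2
      = |(a:ℝ) - (b:ℝ)| := by
  have key : ∀ j ∈ Finset.Icc 1 n,
      ((if j ≤ a then (1:ℝ) else 0) - (if j ≤ b then 1 else 0)) ^ 2
        = if j ∈ Finset.Ioc a b then 1 else 0 := by
    intro j hj
    by_cases h1 : j ≤ a <;> by_cases h2 : j ≤ b
    · simp [h1, h2, Finset.mem_Ioc, Nat.not_lt.mpr h1]
    · exact absurd (h1.trans hab) h2
    · simp [h1, h2, Finset.mem_Ioc, Nat.lt_of_not_le h1]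
    · simp [h1, h2, Finset.mem_Ioc]
  rw [Finset.sum_congr rfl key, Finset.sum_ite_mem,
    Finset.inter_eq_right.mpr (fun j hj => ?_)]
  · rw [Finset.sum_const, Nat.card_Ioc, nsmul_eq_mul, mul_one, abs_sub_comm,
      abs_of_nonneg (by exact sub_nonneg.mpr (Nat.cast_le.mpr hab)),
      Nat.cast_sub hab]
  · rw [Finset.mem_Ioc] at hj
    rw [Finset.mem_Icc]
    omega

lemma sum_sq_ind (n a b : ℕ) (ha : a ≤ n) (hb : b ≤ n) :
    ∑ j ∈ Finset.Icc 1 n, ((if j ≤ a then (1:ℝ) else 0) - (if j ≤ b then 1 else 0)) ^ 2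
      = |(a:ℝ) - (b:ℝ)| := by
  rcases le_total a b with h | h
  · exact sum_sq_ind_le n a b hb h
  · rw [abs_sub_comm, ← sum_sq_ind_le n b a ha h]
    exact Finset.sum_congr rfl (fun j _ => by ring)

/-- For any two `n`-order graphs `G` and `H`, any finite set `𝓕` of graphs
and any `T ≥ 0`, the distance between the 1-WLOA_𝓕 feature vectors of `G` and `H` is at
least the distance between their 1-WLOA feature vectors. -/
theorem wloaF_distance_mono (n : ℕ) (G H : SimpleGraph (Fin n)) (FF : Finset FinGraph)
    (T : ℕ) :
    Real.sqrt (wloaDistSq n G unlab H unlab T) ≤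
      Real.sqrt (wloaDistSq n G (ellF G FF) H (ellF H FF) T) := by
  apply Real.sqrt_le_sqrt
  unfold wloaDistSq
  refine Finset.sum_le_sum (fun t _ => ?_)
  set labG := ellF G FF with hlabG
  set labH := ellF H FF with hlabH
  have hleF : ∀ (K : SimpleGraph (Fin n)) (lab : Fin n → Set FinGraph) c,
      wlCount K lab t c ≤ n := fun K lab c => by
    simpa using wlCount_le K lab t c
  set S' := wlColors G labG t ∪ wlColors H labH t with hS'
  have himg : wlColors G unlab t ∪ wlColors H unlab t = S'.image (wlProj t) := by
    rw [hS', wlColors_proj G labG t, wlColors_proj H labH t, Finset.image_union]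
  calc ∑ c ∈ wlColors G unlab t ∪ wlColors H unlab t,
        ∑ j ∈ Finset.Icc 1 n, (wloaEntry G unlab t c j - wloaEntry H unlab t c j) ^ 2
      = ∑ c ∈ S'.image (wlProj t),
          |(wlCount G unlab t c : ℝ) - (wlCount H unlab t c : ℝ)| := by
        rw [himg]
        refine Finset.sum_congr rfl (fun c _ => ?_)
        exact sum_sq_ind n _ _ (by simpa using wlCount_le G unlab t c)
          (by simpa using wlCount_le H unlab t c)
    _ ≤ ∑ c ∈ S'.image (wlProj t), ∑ c' ∈ S'.filter (fun c' => wlProj t c' = c),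
          |(wlCount G labG t c' : ℝ) - (wlCount H labH t c' : ℝ)| := by
        refine Finset.sum_le_sum (fun c _ => ?_)
        rw [wlCount_proj G labG t S' Finset.subset_union_left c,
          wlCount_proj H labH t S' Finset.subset_union_right c]
        push_cast
        rw [← Finset.sum_sub_distrib]
        exact Finset.abs_sum_le_sum_abs _ _
    _ = ∑ c' ∈ S', |(wlCount G labG t c' : ℝ) - (wlCount H labH t c' : ℝ)| := by
        exact Finset.sum_fiberwise_of_maps_to
          (fun c' hc' => Finset.mem_image_of_mem _ hc') _
    _ = ∑ c ∈ S', ∑ j ∈ Finset.Icc 1 n,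
          (wloaEntry G labG t c j - wloaEntry H labH t c j) ^ 2 := by
        refine Finset.sum_congr rfl (fun c _ => ?_)
        exact (sum_sq_ind n _ _ (hleF G labG c) (hleF H labH c)).symm

end
end
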